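/- Let d ≥ 3 be a fixed integer. There exists δ₀ > 0 such that for every δ ∈ (0, δ₀) there exists a constant c(δ) > 0 with the following property: for every prime p and every t ∈ ℝ^p such that for all j ∈ {0,1,…,p−1} and all m ∈ ℤ^p, the squared Euclidean norm of the orthogonal projection of t − 2πj·(0, 1/p, 2/p, …, (p−1)/p) − 2πm onto the hyperplane orthogonal to the all-ones vector (1,1,…,1) is strictly greater than δ, one has | p^{−(d−1)} Σ_{a ∈ Z_{d,p}} exp(i·⟨t, Φ(a)⟩) | ≤ 1 − c(δ)/p³. -/

import Mathlib

open Finset Complex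

lemma root_sum (p : ℕ) (ζ : ℂ) (h1 : ζ ^ p = 1) (hζ : ζ ≠ 1) :
    ∑ j ∈ Finset.range p, ζ ^ j = 0 := by
  rw [geom_sum_eq hζ, h1, sub_self, zero_div]

lemma exp_ratio_eq_one_iff (p : ℕ) (hp : 0 < p) (n : ℤ) :
    Complex.exp (-(2 * Real.pi * Complex.I) * n / p) = 1 ↔ (p : ℤ) ∣ n := by
  have hπ : (Real.pi : ℂ) ≠ 0 := Complex.ofReal_ne_zero.2 Real.pi_ne_zero
  have hI : Complex.I ≠ 0 := Complex.I_ne_zero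
  have hp' : (p : ℂ) ≠ 0 := Nat.cast_ne_zero.2 hp.ne'
  rw [Complex.exp_eq_one_iff]
  constructor
  · rintro ⟨k, hk⟩
    refine ⟨-k, ?_⟩
    have h : (n : ℂ) = ((-(k * p) : ℤ) : ℂ) := by
      field_simp at hk
      push_cast
      apply mul_left_cancel₀ (mul_ne_zero (mul_ne_zero (two_ne_zero' ℂ) hπ) hI)
      ring_nf
      ring_nf at hk
      linear_combination (-(2 * (Real.pi:ℂ) * Complex.I)) * hk
    have h2 : n = -(k * p) := by exact_mod_cast h
    linear_combination h2
  · rintro ⟨k, rfl⟩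
    refine ⟨-k, ?_⟩
    push_cast
    field_simp

lemma exp_ratio_pow (p : ℕ) (hp : 0 < p) (n : ℤ) :
    Complex.exp (-(2 * Real.pi * Complex.I) * n / p) ^ p = 1 := by
  have hp' : (p : ℂ) ≠ 0 := Nat.cast_ne_zero.2 hp.ne'
  rw [← Complex.exp_nat_mul]
  have : (p : ℂ) * (-(2 * Real.pi * Complex.I) * n / p) = (-n) * (2 * Real.pi * Complex.I) := by
    field_simp
  rw [this]
  exact_mod_cast Complex.exp_int_mul_two_pi_mul_I (-n)

lemma indicator_sum (p : ℕ) (hp : 0 < p) (n : ℤ) :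
    ∑ j ∈ Finset.range p, Complex.exp (-(2 * Real.pi * Complex.I) * j * n / p)
      = if (p : ℤ) ∣ n then (p : ℂ) else 0 := by
  have hterm : ∀ j : ℕ, Complex.exp (-(2 * Real.pi * Complex.I) * j * n / p)
      = Complex.exp (-(2 * Real.pi * Complex.I) * n / p) ^ j := by
    intro j
    rw [← Complex.exp_nat_mul]
    congr 1
    ring
  simp only [hterm]
  by_cases h : (p : ℤ) ∣ n
  · rw [if_pos h]
    have h1 := (exp_ratio_eq_one_iff p hp n).2 h
    simp only [h1, one_pow, Finset.sum_const, Finset.card_range, nsmul_eq_mul, mul_one]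
  · rw [if_neg h]
    exact root_sum p _ (exp_ratio_pow p hp n) (fun h1 => h ((exp_ratio_eq_one_iff p hp n).1 h1))

/-- The counting map `Φ` : the `j`-th coordinate of `Φ(a)` is `#{r : a r = j}`. -/
def Phi {d p : ℕ} (a : Fin d → ZMod p) (j : ZMod p) : ℕ :=
  (Finset.univ.filter (fun r : Fin d => a r = j)).card

lemma phi_inner {d p : ℕ} [NeZero p] (t : ZMod p → ℝ) (a : Fin d → ZMod p) :
    ∑ k : ZMod p, (t k : ℂ) * (Phi a k : ℂ) = ∑ r, (t (a r) : ℂ) := by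
  rw [← Finset.sum_fiberwise' Finset.univ a (fun k => (t k : ℂ))]
  refine Finset.sum_congr rfl fun k _ => ?_
  rw [Phi, Finset.sum_const, nsmul_eq_mul, mul_comm]

lemma key_identity (d p : ℕ) [NeZero p] (t : ZMod p → ℝ) :
    ∑ a ∈ Finset.univ.filter (fun a : Fin d → ZMod p => ∑ r, a r = 0),
        Complex.exp (Complex.I * (∑ k : ZMod p, (t k : ℂ) * (Phi a k : ℂ)))
      = (p : ℂ)⁻¹ * ∑ j ∈ Finset.range p,
          (∑ k : ZMod p, Complex.exp (Complex.I * (t k : ℂ)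
              + -(2 * Real.pi * Complex.I) * j * (k.val : ℂ) / p)) ^ d := by
  have hp : 0 < p := Nat.pos_of_ne_zero (NeZero.ne p)
  have hp' : (p : ℂ) ≠ 0 := Nat.cast_ne_zero.2 hp.ne'
  have expand : ∀ j : ℕ,
      (∑ k : ZMod p, Complex.exp (Complex.I * (t k : ℂ)
          + -(2 * Real.pi * Complex.I) * j * (k.val : ℂ) / p)) ^ d
      = ∑ a : Fin d → ZMod p,
          Complex.exp (Complex.I * ∑ r, (t (a r) : ℂ)) *
            Complex.exp (-(2 * Real.pi * Complex.I) * j * ((∑ r, (a r).val : ℕ) : ℂ) / p) := by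
    intro j
    rw [Fintype.sum_pow]
    refine Finset.sum_congr rfl fun a _ => ?_
    rw [← Complex.exp_sum, ← Complex.exp_add]
    congr 1
    calc ∑ r, (Complex.I * (t (a r) : ℂ)
            + -(2 * Real.pi * Complex.I) * j * ((a r).val : ℂ) / p)
        = Complex.I * ∑ r, (t (a r) : ℂ)
            + -(2 * Real.pi * Complex.I) * j * (∑ r, ((a r).val : ℂ)) / p := by
          rw [Finset.sum_add_distrib, ← Finset.mul_sum, ← Finset.sum_div, ← Finset.mul_sum]
      _ = _ := by push_cast; ring
  simp only [expand]
  rw [Finset.sum_comm]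
  have inner : ∀ a : Fin d → ZMod p,
      ∑ j ∈ Finset.range p,
          Complex.exp (Complex.I * ∑ r, (t (a r) : ℂ)) *
            Complex.exp (-(2 * Real.pi * Complex.I) * j * ((∑ r, (a r).val : ℕ) : ℂ) / p)
      = if (∑ r, a r) = 0 then (p : ℂ) * Complex.exp (Complex.I * ∑ r, (t (a r) : ℂ)) else 0 := by
    intro a
    rw [← Finset.mul_sum]
    have hind := indicator_sum p hp ((∑ r, (a r).val : ℕ) : ℤ)
    have hcast : ∀ j : ℕ, (-(2 * Real.pi * Complex.I) * j * (((∑ r, (a r).val : ℕ) : ℤ) : ℂ) / p)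
        = (-(2 * Real.pi * Complex.I) * j * ((∑ r, (a r).val : ℕ) : ℂ) / p) := by
      intro j; push_cast; ring
    simp only [hcast] at hind
    rw [hind]
    have hiff : ((p : ℤ) ∣ ((∑ r, (a r).val : ℕ) : ℤ)) ↔ (∑ r, a r) = 0 := by
      rw [Int.natCast_dvd_natCast, ← ZMod.natCast_eq_zero_iff]
      have : ((∑ r, (a r).val : ℕ) : ZMod p) = ∑ r, a r := by
        push_cast [ZMod.natCast_zmod_val]
        rfl
      rw [this]
    by_cases hc : (∑ r, a r) = 0
    · rw [if_pos (hiff.2 hc), if_pos hc]; ring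
    · rw [if_neg (fun hd => hc (hiff.1 hd)), if_neg hc, mul_zero]
  rw [Finset.sum_congr rfl (fun a _ => inner a)]
  rw [← Finset.sum_filter, Finset.mul_sum]
  refine Finset.sum_congr rfl fun a _ => ?_
  rw [phi_inner t a, ← mul_assoc, inv_mul_cancel₀ hp', one_mul]

lemma parseval (p : ℕ) [NeZero p] (t : ZMod p → ℝ) :
    ∑ j ∈ Finset.range p,
        Complex.normSq (∑ k : ZMod p, Complex.exp (Complex.I * (t k : ℂ)
            + -(2 * Real.pi * Complex.I) * j * (k.val : ℂ) / p))
      = (p : ℝ) ^ 2 := by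
  have hp : 0 < p := Nat.pos_of_ne_zero (NeZero.ne p)
  have key : ∑ j ∈ Finset.range p,
      ((∑ k : ZMod p, Complex.exp (Complex.I * (t k : ℂ)
            + -(2 * Real.pi * Complex.I) * j * (k.val : ℂ) / p)) *
        (starRingEnd ℂ) (∑ k : ZMod p, Complex.exp (Complex.I * (t k : ℂ)
            + -(2 * Real.pi * Complex.I) * j * (k.val : ℂ) / p)))
      = (p : ℂ) ^ 2 := by
    have hconj : ∀ (j : ℕ) (l : ZMod p),
        (starRingEnd ℂ) (Complex.exp (Complex.I * (t l : ℂ)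
            + -(2 * Real.pi * Complex.I) * j * (l.val : ℂ) / p))
        = Complex.exp (-(Complex.I * (t l : ℂ)) + (2 * Real.pi * Complex.I) * j * (l.val : ℂ) / p) := by
      intro j l
      rw [← Complex.exp_conj]
      congr 1
      simp only [map_add, map_mul, map_div₀, map_neg, map_ofNat, Complex.conj_I,
        Complex.conj_ofReal, map_natCast]
      ring
    have hterm : ∀ j : ℕ,
        ((∑ k : ZMod p, Complex.exp (Complex.I * (t k : ℂ)
              + -(2 * Real.pi * Complex.I) * j * (k.val : ℂ) / p)) *
          (starRingEnd ℂ) (∑ k : ZMod p, Complex.exp (Complex.I * (t k : ℂ)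
              + -(2 * Real.pi * Complex.I) * j * (k.val : ℂ) / p)))
        = ∑ k : ZMod p, ∑ l : ZMod p,
            Complex.exp (Complex.I * (t k : ℂ) - Complex.I * (t l : ℂ)) *
              Complex.exp (-(2 * Real.pi * Complex.I) * j * (((k.val : ℤ) - (l.val : ℤ) : ℤ) : ℂ) / p) := by
      intro j
      rw [map_sum, Finset.sum_mul_sum]
      refine Finset.sum_congr rfl fun k _ => Finset.sum_congr rfl fun l _ => ?_
      rw [hconj j l, ← Complex.exp_add, ← Complex.exp_add]
      congr 1
      push_cast
      have hpne : (p : ℂ) ≠ 0 := Nat.cast_ne_zero.2 hp.ne'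
      field_simp
      ring
    simp only [hterm]
    rw [Finset.sum_comm]
    have inner1 : ∀ k : ZMod p, ∑ l ∈ (Finset.univ : Finset (ZMod p)), ∑ j ∈ Finset.range p,
        Complex.exp (Complex.I * (t k : ℂ) - Complex.I * (t l : ℂ)) *
          Complex.exp (-(2 * Real.pi * Complex.I) * j * (((k.val : ℤ) - (l.val : ℤ) : ℤ) : ℂ) / p)
        = (p : ℂ) := by
      intro k
      have inner2 : ∀ l : ZMod p, ∑ j ∈ Finset.range p,
          Complex.exp (Complex.I * (t k : ℂ) - Complex.I * (t l : ℂ)) *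
            Complex.exp (-(2 * Real.pi * Complex.I) * j * (((k.val : ℤ) - (l.val : ℤ) : ℤ) : ℂ) / p)
          = if l = k then (p : ℂ) else 0 := by
        intro l
        rw [← Finset.mul_sum, indicator_sum p hp ((k.val : ℤ) - (l.val : ℤ))]
        have hiff : ((p : ℤ) ∣ ((k.val : ℤ) - (l.val : ℤ))) ↔ l = k := by
          rw [← ZMod.intCast_zmod_eq_zero_iff_dvd]
          push_cast [ZMod.natCast_zmod_val]
          constructor
          · intro h; have := sub_eq_zero.1 h; exact this.symm
          · intro h; rw [h, sub_self]
        by_cases hc : l = k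
        · rw [if_pos (hiff.2 hc), if_pos hc, hc, sub_self, Complex.exp_zero, one_mul]
        · rw [if_neg (fun hd => hc (hiff.1 hd)), if_neg hc, mul_zero]
      rw [Finset.sum_congr rfl (fun l _ => inner2 l), Finset.sum_ite_eq' Finset.univ k (fun _ => (p : ℂ))]
      simp
    rw [Finset.sum_congr rfl (fun k (_ : k ∈ (Finset.univ : Finset (ZMod p))) =>
      (Finset.sum_comm : ∑ j ∈ Finset.range p, ∑ l : ZMod p,
          Complex.exp (Complex.I * (t k : ℂ) - Complex.I * (t l : ℂ)) *
            Complex.exp (-(2 * Real.pi * Complex.I) * j * (((k.val : ℤ) - (l.val : ℤ) : ℤ) : ℂ) / p) = _))]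
    rw [Finset.sum_congr rfl (fun k _ => inner1 k), Finset.sum_const]
    simp [ZMod.card, sq]
  have := key
  simp only [Complex.mul_conj] at this
  have h2 : ((∑ j ∈ Finset.range p, (Complex.normSq (∑ k : ZMod p, Complex.exp (Complex.I * (t k : ℂ)
      + -(2 * Real.pi * Complex.I) * j * (k.val : ℂ) / p)) : ℝ) : ℂ)) = ((p : ℝ) ^ 2 : ℂ) := by
    push_cast
    push_cast at this
    convert this using 2
  exact_mod_cast h2


lemma mean_min (p : ℕ) [NeZero p] (v : ZMod p → ℝ) (c : ℝ) :
    ∑ k : ZMod p, (v k - (∑ l : ZMod p, v l) / p) ^ 2 ≤ ∑ k : ZMod p, (v k - c) ^ 2 := by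
  have hp : 0 < p := Nat.pos_of_ne_zero (NeZero.ne p)
  have hp' : (0:ℝ) < p := by exact_mod_cast hp
  set S := ∑ l : ZMod p, v l with hS
  have expand : ∀ b : ℝ, ∑ k : ZMod p, (v k - b) ^ 2
      = ∑ k : ZMod p, (v k) ^ 2 - 2 * b * S + p * b ^ 2 := by
    intro b
    have : ∀ k : ZMod p, (v k - b) ^ 2 = (v k) ^ 2 - 2 * b * (v k) + b ^ 2 := fun k => by ring
    rw [Finset.sum_congr rfl (fun k _ => this k), Finset.sum_add_distrib,
      Finset.sum_sub_distrib, ← Finset.mul_sum, Finset.sum_const, Finset.card_univ, ZMod.card]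
    push_cast
    ring
  set m := S / p with hm
  have hpm : (p:ℝ) * m = S := by rw [hm]; field_simp [hp'.ne']
  rw [expand, expand, ← hpm]
  nlinarith [mul_nonneg hp'.le (sq_nonneg (m - c))]

lemma jordan_ineq (x : ℝ) (hx : |x| ≤ Real.pi) : x ^ 2 ≤ Real.pi ^ 2 / 2 * (1 - Real.cos x) := by
  have habs : |x / 2| = |x| / 2 := by rw [abs_div]; norm_num
  have h2 : |x / 2| ≤ Real.pi / 2 := by rw [habs]; linarith
  have hj := Real.mul_abs_le_abs_sin h2
  have hπ : (0:ℝ) < Real.pi := Real.pi_pos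
  have hsq : (2 / Real.pi * |x / 2|) ^ 2 ≤ |Real.sin (x / 2)| ^ 2 := by
    apply pow_le_pow_left₀ (by positivity) hj
  rw [_root_.sq_abs] at hsq
  have hsin : Real.sin (x / 2) ^ 2 = (1 - Real.cos x) / 2 := by
    have h := Real.sin_sq_eq_half_sub (x / 2)
    rw [show 2 * (x / 2) = x by ring] at h
    rw [h]; ring
  rw [hsin] at hsq
  have : (2 / Real.pi * |x / 2|) ^ 2 = x ^ 2 / Real.pi ^ 2 := by
    rw [mul_pow, div_pow, _root_.sq_abs, div_pow]
    field_simp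
  rw [this] at hsq
  rw [div_le_iff₀ (by positivity)] at hsq
  nlinarith

lemma pointwise_bound (p : ℕ) [NeZero p] (δ : ℝ) (u : ZMod p → ℝ)
    (h : ∀ m : ZMod p → ℤ,
      δ < ∑ k : ZMod p, ((u k - 2 * Real.pi * (m k))
          - (∑ l : ZMod p, (u l - 2 * Real.pi * (m l))) / p) ^ 2) :
    Complex.normSq (∑ k : ZMod p, Complex.exp ((u k : ℂ) * Complex.I))
      ≤ (p : ℝ) ^ 2 - 2 * δ / Real.pi ^ 2 := by
  have hp : 0 < p := Nat.pos_of_ne_zero (NeZero.ne p)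
  have hπ : (0:ℝ) < Real.pi := Real.pi_pos
  set m : ZMod p → ℤ := fun k => round ((u k - u 0) / (2 * Real.pi)) with hmdef
  set x : ZMod p → ℝ := fun k => u k - u 0 - 2 * Real.pi * (m k) with hxdef
  -- |x k| ≤ π
  have hxbound : ∀ k : ZMod p, |x k| ≤ Real.pi := by
    intro k
    have hr := abs_sub_round ((u k - u 0) / (2 * Real.pi))
    have heq : x k = (2 * Real.pi) * ((u k - u 0) / (2 * Real.pi) - m k) := by
      simp only [hxdef]; field_simp
    rw [heq, abs_mul, abs_of_pos (by positivity : (0:ℝ) < 2 * Real.pi)]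
    calc 2 * Real.pi * |(u k - u 0) / (2 * Real.pi) - ↑(m k)|
        ≤ 2 * Real.pi * (1/2) := by
          apply mul_le_mul_of_nonneg_left hr (by positivity)
      _ = Real.pi := by ring
  -- from hypothesis with this m
  have hδ1 : δ < ∑ k : ZMod p, (x k) ^ 2 := by
    have h1 := h m
    have h2 := mean_min p (fun k => u k - 2 * Real.pi * (m k)) (u 0)
    calc δ < ∑ k : ZMod p, ((u k - 2 * Real.pi * (m k))
          - (∑ l : ZMod p, (u l - 2 * Real.pi * (m l))) / p) ^ 2 := h1
      _ ≤ ∑ k : ZMod p, ((u k - 2 * Real.pi * (m k)) - u 0) ^ 2 := h2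
      _ = ∑ k : ZMod p, (x k) ^ 2 := by
          refine Finset.sum_congr rfl fun k _ => ?_
          rw [hxdef]; ring_nf
  -- cos periodicity and jordan
  have hcos : ∀ k : ZMod p, Real.cos (x k) = Real.cos (u k - u 0) := by
    intro k
    have : x k = (u k - u 0) - (m k) * (2 * Real.pi) := by rw [hxdef]; ring
    rw [this, Real.cos_sub_int_mul_two_pi]
  have hδ2 : 2 * δ / Real.pi ^ 2 < ∑ k : ZMod p, (1 - Real.cos (u k - u 0)) := by
    have hsum : ∑ k : ZMod p, (x k) ^ 2
        ≤ Real.pi ^ 2 / 2 * ∑ k : ZMod p, (1 - Real.cos (u k - u 0)) := by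
      rw [Finset.mul_sum]
      refine Finset.sum_le_sum fun k _ => ?_
      rw [← hcos k]
      exact jordan_ineq (x k) (hxbound k)
    have := lt_of_lt_of_le hδ1 hsum
    rw [div_lt_iff₀ (by positivity : (0:ℝ) < Real.pi ^ 2)]
    nlinarith
  -- normSq expansion
  have hre : (∑ k : ZMod p, Complex.exp ((u k : ℂ) * Complex.I)).re
      = ∑ k : ZMod p, Real.cos (u k) := by
    rw [Complex.re_sum]
    exact Finset.sum_congr rfl fun k _ => Complex.exp_ofReal_mul_I_re (u k)
  have him : (∑ k : ZMod p, Complex.exp ((u k : ℂ) * Complex.I)).im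
      = ∑ k : ZMod p, Real.sin (u k) := by
    rw [Complex.im_sum]
    exact Finset.sum_congr rfl fun k _ => Complex.exp_ofReal_mul_I_im (u k)
  have hnormSq : Complex.normSq (∑ k : ZMod p, Complex.exp ((u k : ℂ) * Complex.I))
      = ∑ k : ZMod p, ∑ l : ZMod p, Real.cos (u k - u l) := by
    rw [Complex.normSq_apply, hre, him, Finset.sum_mul_sum, Finset.sum_mul_sum,
      ← Finset.sum_add_distrib]
    refine Finset.sum_congr rfl fun k _ => ?_
    rw [← Finset.sum_add_distrib]
    refine Finset.sum_congr rfl fun l _ => ?_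
    rw [Real.cos_sub]
    try ring
  rw [hnormSq]
  have hsplit : ∑ k : ZMod p, ∑ l : ZMod p, (1 - Real.cos (u k - u l))
      = (p : ℝ) ^ 2 - ∑ k : ZMod p, ∑ l : ZMod p, Real.cos (u k - u l) := by
    simp only [Finset.sum_sub_distrib, Finset.sum_const, Finset.card_univ, ZMod.card,
      nsmul_eq_mul, mul_one]
    try push_cast
    try ring
  have hlower : ∑ k : ZMod p, (1 - Real.cos (u k - u 0))
      ≤ ∑ k : ZMod p, ∑ l : ZMod p, (1 - Real.cos (u k - u l)) := by
    refine Finset.sum_le_sum fun k _ => ?_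
    refine Finset.single_le_sum (f := fun l => 1 - Real.cos (u k - u l))
      (fun l _ => ?_) (Finset.mem_univ (0 : ZMod p))
    nlinarith [Real.cos_le_one (u k - u l)]
  linarith

/-- Characteristic function bound: for `d ≥ 3` there is `δ₀ > 0` such that for all
`δ ∈ (0, δ₀)` there is `c(δ) > 0` with: for every prime `p` and every `t ∈ ℝ^p` whose
projection orthogonal to the all-ones vector stays at squared distance `> δ` from every
point `2πj(0,1/p,…,(p-1)/p) + 2πm` (`j ∈ {0,…,p-1}`, `m ∈ ℤ^p`), one has
`|p^{-(d-1)} Σ_{a ∈ Z_{d,p}} e^{i⟨t, Φ(a)⟩}| ≤ 1 - c(δ)/p³`. -/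
theorem characteristic_function_bound (d : ℕ) (hd : 3 ≤ d) :
    ∃ δ₀ : ℝ, 0 < δ₀ ∧ ∀ δ : ℝ, 0 < δ → δ < δ₀ → ∃ c : ℝ, 0 < c ∧
      ∀ (p : ℕ) [Fact p.Prime], ∀ t : ZMod p → ℝ,
        (∀ j : ℕ, j < p → ∀ m : ZMod p → ℤ,
          δ < ∑ k : ZMod p,
            ((t k - 2 * Real.pi * j * ((k.val : ℝ) / p) - 2 * Real.pi * (m k)) -
              (∑ l : ZMod p,
                (t l - 2 * Real.pi * j * ((l.val : ℝ) / p) - 2 * Real.pi * (m l))) / p) ^ 2) →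
        ‖(p : ℂ) ^ (-((d : ℤ) - 1)) *
            ∑ a ∈ Finset.univ.filter (fun a : Fin d → ZMod p => ∑ r, a r = 0),
              Complex.exp (Complex.I * (∑ k : ZMod p, (t k : ℂ) * (Phi a k : ℂ)))‖
          ≤ 1 - c / (p : ℝ) ^ 3 := by
  have hπ : (0:ℝ) < Real.pi := Real.pi_pos
  have hπ2 : (9:ℝ) < Real.pi ^ 2 := by nlinarith [Real.pi_gt_three]
  refine ⟨1, one_pos, fun δ hδ hδ1 => ⟨δ / Real.pi ^ 2, by positivity, ?_⟩⟩
  intro p hfact t ht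
  have hp0 : 0 < p := hfact.out.pos
  have hp2 : 2 ≤ p := hfact.out.two_le
  have hpR : (0:ℝ) < p := by exact_mod_cast hp0
  have hpR1 : (1:ℝ) ≤ p := by exact_mod_cast hp0
  obtain ⟨e, rfl⟩ : ∃ e, d = e + 3 := ⟨d - 3, by omega⟩
  set ε : ℝ := δ / (Real.pi ^ 2 * (p:ℝ) ^ 2) with hε
  have hε_pos : 0 < ε := by positivity
  have hε_lt : ε < 1 := by
    rw [hε, div_lt_one (by positivity)]
    nlinarith
  set B : ℝ := (p:ℝ) * (1 - ε) with hB
  have hB_nonneg : 0 ≤ B := by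
    rw [hB]; apply mul_nonneg hpR.le; linarith
  -- pointwise bound
  have hGb : ∀ j : ℕ, j < p → ‖∑ k : ZMod p, Complex.exp (Complex.I * (t k : ℂ)
      + -(2 * Real.pi * Complex.I) * j * (k.val : ℂ) / p)‖ ≤ B := by
    intro j hj
    have hpt := pointwise_bound p δ (fun k => t k - 2 * Real.pi * j * ((k.val : ℝ) / p))
      (fun m => ht j hj m)
    have hGu : (∑ k : ZMod p, Complex.exp (Complex.I * (t k : ℂ)
          + -(2 * Real.pi * Complex.I) * j * (k.val : ℂ) / p))
        = ∑ k : ZMod p, Complex.exp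
            (((t k - 2 * Real.pi * j * ((k.val : ℝ) / p) : ℝ) : ℂ) * Complex.I) := by
      refine Finset.sum_congr rfl fun k _ => ?_
      congr 1
      push_cast
      have hpC : (p:ℂ) ≠ 0 := Nat.cast_ne_zero.2 hp0.ne'
      field_simp
      ring
    rw [hGu]
    have hsq : ‖∑ k : ZMod p, Complex.exp
        (((t k - 2 * Real.pi * j * ((k.val : ℝ) / p) : ℝ) : ℂ) * Complex.I)‖ ^ 2 ≤ B ^ 2 := by
      rw [Complex.sq_norm]
      refine le_trans hpt ?_
      have : B ^ 2 = (p:ℝ)^2 - 2 * δ / Real.pi ^ 2 + (p:ℝ)^2 * ε^2 := by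
        rw [hB, hε]
        field_simp
        ring
      nlinarith [sq_nonneg ((p:ℝ) * ε)]
    have := Real.sqrt_le_sqrt hsq
    rwa [Real.sqrt_sq (norm_nonneg _), Real.sqrt_sq hB_nonneg] at this
  -- assemble
  rw [key_identity (e + 3) p t]
  have hsum : ‖∑ j ∈ Finset.range p,
      (∑ k : ZMod p, Complex.exp (Complex.I * (t k : ℂ)
          + -(2 * Real.pi * Complex.I) * j * (k.val : ℂ) / p)) ^ (e + 3)‖
      ≤ B ^ (e + 1) * (p:ℝ) ^ 2 := by
    calc ‖∑ j ∈ Finset.range p,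
        (∑ k : ZMod p, Complex.exp (Complex.I * (t k : ℂ)
            + -(2 * Real.pi * Complex.I) * j * (k.val : ℂ) / p)) ^ (e + 3)‖
        ≤ ∑ j ∈ Finset.range p, ‖(∑ k : ZMod p, Complex.exp (Complex.I * (t k : ℂ)
            + -(2 * Real.pi * Complex.I) * j * (k.val : ℂ) / p)) ^ (e + 3)‖ :=
          norm_sum_le _ _
      _ ≤ ∑ j ∈ Finset.range p, B ^ (e + 1) *
            Complex.normSq (∑ k : ZMod p, Complex.exp (Complex.I * (t k : ℂ)
              + -(2 * Real.pi * Complex.I) * j * (k.val : ℂ) / p)) := by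
          refine Finset.sum_le_sum fun j hj => ?_
          rw [norm_pow]
          have habs := hGb j (Finset.mem_range.1 hj)
          have hnn := norm_nonneg (∑ k : ZMod p,
            Complex.exp (Complex.I * (t k : ℂ)
              + -(2 * Real.pi * Complex.I) * j * (k.val : ℂ) / p))
          calc ‖∑ k : ZMod p, Complex.exp (Complex.I * (t k : ℂ)
                + -(2 * Real.pi * Complex.I) * j * (k.val : ℂ) / p)‖ ^ (e + 3)
              = ‖∑ k : ZMod p, Complex.exp (Complex.I * (t k : ℂ)
                  + -(2 * Real.pi * Complex.I) * j * (k.val : ℂ) / p)‖ ^ (e + 1) *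
                ‖∑ k : ZMod p, Complex.exp (Complex.I * (t k : ℂ)
                  + -(2 * Real.pi * Complex.I) * j * (k.val : ℂ) / p)‖ ^ 2 := by ring
            _ ≤ B ^ (e + 1) *
                ‖∑ k : ZMod p, Complex.exp (Complex.I * (t k : ℂ)
                  + -(2 * Real.pi * Complex.I) * j * (k.val : ℂ) / p)‖ ^ 2 := by
                apply mul_le_mul_of_nonneg_right (pow_le_pow_left₀ hnn habs _) (sq_nonneg _)
            _ = B ^ (e + 1) * Complex.normSq (∑ k : ZMod p, Complex.exp (Complex.I * (t k : ℂ)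
                  + -(2 * Real.pi * Complex.I) * j * (k.val : ℂ) / p)) := by
                rw [Complex.sq_norm]
      _ = B ^ (e + 1) * (p:ℝ) ^ 2 := by rw [← Finset.mul_sum, parseval p t]
  rw [norm_mul, norm_mul, norm_zpow, norm_inv, Complex.norm_natCast]
  have hzpow : (p:ℝ) ^ (-(((e + 3 : ℕ) : ℤ) - 1)) = ((p:ℝ) ^ (e + 2 : ℕ))⁻¹ := by
    rw [show (-(((e + 3 : ℕ) : ℤ) - 1)) = -((e + 2 : ℕ) : ℤ) by push_cast; ring,
      zpow_neg, zpow_natCast]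
  rw [hzpow]
  have hmono : ((p:ℝ) ^ (e + 2 : ℕ))⁻¹ * ((p:ℝ)⁻¹ * ‖∑ j ∈ Finset.range p,
      (∑ k : ZMod p, Complex.exp (Complex.I * (t k : ℂ)
          + -(2 * Real.pi * Complex.I) * j * (k.val : ℂ) / p)) ^ (e + 3)‖)
      ≤ ((p:ℝ) ^ (e + 2 : ℕ))⁻¹ * ((p:ℝ)⁻¹ * (B ^ (e + 1) * (p:ℝ) ^ 2)) := by
    apply mul_le_mul_of_nonneg_left _ (by positivity)
    apply mul_le_mul_of_nonneg_left hsum (by positivity)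
  refine le_trans hmono ?_
  have hBval : B ^ (e + 1) = (p:ℝ) ^ (e + 1) * (1 - ε) ^ (e + 1) := by
    rw [hB, mul_pow]
  rw [hBval]
  have hclean : ((p:ℝ) ^ (e + 2 : ℕ))⁻¹ * ((p:ℝ)⁻¹ * ((p:ℝ) ^ (e + 1) * (1 - ε) ^ (e + 1) * (p:ℝ) ^ 2))
      = (1 - ε) ^ (e + 1) := by
    field_simp
    ring
  rw [hclean]
  have h1 : (1 - ε) ^ (e + 1) ≤ 1 - ε :=
    pow_le_of_le_one (by linarith) (by linarith) (Nat.succ_ne_zero e)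
  have h2 : δ / Real.pi ^ 2 / (p:ℝ) ^ 3 ≤ ε := by
    rw [hε, div_div]
    apply div_le_div_of_nonneg_left hδ.le (by positivity)
    nlinarith [mul_nonneg (sq_nonneg Real.pi) (mul_nonneg (sq_nonneg (p:ℝ)) (sub_nonneg.2 hpR1))]
  linarith
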